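/- Let H be a bialgebra. The set Reg²_L(H) of lazy elements of Reg²(H), i.e. normalized convolution-invertible σ : H ⊗ H → k satisfying σ(h₁,h'₁)h₂h'₂ = h₁h'₁σ(h₂,h'₂) for all h,h' ∈ H, is a subgroup of Reg²(H) under convolution. -/

import Mathlib

open TensorProduct

noncomputable section

universe u

section Defs

variable {k : Type u} [CommRing k] {H : Type u} [Ring H] [Bialgebra k H]

/-- Convolution product on the dual of a coalgebra. -/
def conv {C : Type u} [AddCommGroup C] [Module k C] [Coalgebra k C]
    (f g : C →ₗ[k] k) : C →ₗ[k] k :=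
  LinearMap.mul' k k ∘ₗ TensorProduct.map f g ∘ₗ Coalgebra.comul

/-- `a ⊗ b ↦ a · ε(b)`. -/
def pr1 : H ⊗[k] H →ₗ[k] H :=
  (TensorProduct.rid k H).toLinearMap ∘ₗ TensorProduct.map LinearMap.id Coalgebra.counit

/-- `a ⊗ (b ⊗ c) ↦ ε(a) · (b ⊗ c)`. -/
def dropL3 : H ⊗[k] (H ⊗[k] H) →ₗ[k] H ⊗[k] H :=
  (TensorProduct.lid k (H ⊗[k] H)).toLinearMap ∘ₗ TensorProduct.map Coalgebra.counit LinearMap.id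

/-- Multiplication of `H` as a linear map `H ⊗ H → H`. -/
def mulH : H ⊗[k] H →ₗ[k] H := LinearMap.mul' k H

/-- `σ` is normalized: `σ(1,h) = ε(h) = σ(h,1)`. -/
def Normalized (σ : H ⊗[k] H →ₗ[k] k) : Prop :=
  ∀ h : H, σ (1 ⊗ₜ[k] h) = Coalgebra.counit (R := k) h ∧
    σ (h ⊗ₜ[k] 1) = Coalgebra.counit (R := k) h

/-- Left 2-cocycle condition: `σ(a₁,b₁)σ(a₂b₂,c) = σ(b₁,c₁)σ(a,b₂c₂)`, expressed as an
equality of linear functionals on `H ⊗ (H ⊗ H)` (convolution of the indicated factors). -/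
def IsLeftCocycle (σ : H ⊗[k] H →ₗ[k] k) : Prop :=
  conv (σ ∘ₗ TensorProduct.map LinearMap.id pr1)
      (σ ∘ₗ TensorProduct.map mulH LinearMap.id ∘ₗ (TensorProduct.assoc k H H H).symm.toLinearMap)
  = conv (σ ∘ₗ dropL3) (σ ∘ₗ TensorProduct.map LinearMap.id mulH)

/-- Right 2-cocycle condition: `σ(a₁b₁,c)σ(a₂,b₂) = σ(a,b₁c₁)σ(b₂,c₂)`. -/
def IsRightCocycle (σ : H ⊗[k] H →ₗ[k] k) : Prop :=
  conv (σ ∘ₗ TensorProduct.map mulH LinearMap.id ∘ₗ (TensorProduct.assoc k H H H).symm.toLinearMap)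
      (σ ∘ₗ TensorProduct.map LinearMap.id pr1)
  = conv (σ ∘ₗ TensorProduct.map LinearMap.id mulH) (σ ∘ₗ dropL3)

/-- Laziness for `σ : H ⊗ H → k`: `σ(h₁,h'₁)h₂h'₂ = h₁h'₁σ(h₂,h'₂)`. -/
def IsLazy2 (σ : H ⊗[k] H →ₗ[k] k) : Prop :=
  (TensorProduct.lid k H).toLinearMap ∘ₗ TensorProduct.map σ mulH ∘ₗ Coalgebra.comul
  = (TensorProduct.rid k H).toLinearMap ∘ₗ TensorProduct.map mulH σ ∘ₗ Coalgebra.comul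

/-- Laziness for `γ : H → k`: `γ(h₁)h₂ = h₁γ(h₂)`. -/
def IsLazy1 (γ : H →ₗ[k] k) : Prop :=
  (TensorProduct.lid k H).toLinearMap ∘ₗ TensorProduct.map γ LinearMap.id ∘ₗ Coalgebra.comul
  = (TensorProduct.rid k H).toLinearMap ∘ₗ TensorProduct.map LinearMap.id γ ∘ₗ Coalgebra.comul

/-- Neatness: `σ(a,b₁)σ(b₂,c) = σ(b₁,c)σ(a,b₂)`. -/
def Neat2 (σ : H ⊗[k] H →ₗ[k] k) : Prop :=
  conv (σ ∘ₗ TensorProduct.map LinearMap.id pr1) (σ ∘ₗ dropL3)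
  = conv (σ ∘ₗ dropL3) (σ ∘ₗ TensorProduct.map LinearMap.id pr1)

/-- `a ⊗ (b ⊗ (c ⊗ d)) ↦ ε(a) (b ⊗ (c ⊗ d))`. -/
def dropL4 : H ⊗[k] (H ⊗[k] (H ⊗[k] H)) →ₗ[k] H ⊗[k] (H ⊗[k] H) :=
  (TensorProduct.lid k (H ⊗[k] (H ⊗[k] H))).toLinearMap ∘ₗ
    TensorProduct.map Coalgebra.counit LinearMap.id

/-- `(a,b,c,d) ↦ σ(ab, c) ε(d)`. -/
def fPure (σ : H ⊗[k] H →ₗ[k] k) : H ⊗[k] (H ⊗[k] (H ⊗[k] H)) →ₗ[k] k :=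
  σ ∘ₗ TensorProduct.map mulH LinearMap.id ∘ₗ (TensorProduct.assoc k H H H).symm.toLinearMap ∘ₗ
    TensorProduct.map LinearMap.id (TensorProduct.map LinearMap.id pr1)

/-- `(a,b,c,d) ↦ ε(a) τ(b, c) ε(d)`. -/
def gPure (τ : H ⊗[k] H →ₗ[k] k) : H ⊗[k] (H ⊗[k] (H ⊗[k] H)) →ₗ[k] k :=
  τ ∘ₗ TensorProduct.map LinearMap.id pr1 ∘ₗ dropL4

/-- `(a,b,c,d) ↦ ε(a) σ(b, cd)`. -/
def hPure (σ : H ⊗[k] H →ₗ[k] k) : H ⊗[k] (H ⊗[k] (H ⊗[k] H)) →ₗ[k] k :=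
  σ ∘ₗ TensorProduct.map LinearMap.id mulH ∘ₗ dropL4

/-- Purity for a map `σ` with convolution inverse `τ = σ⁻¹`:
`σ(ab₁,c₁)σ⁻¹(b₂,c₂)σ(b₃,c₃d) = σ(b₁,c₁d)σ⁻¹(b₂,c₂)σ(ab₃,c₃)`. -/
def Pure2 (σ τ : H ⊗[k] H →ₗ[k] k) : Prop :=
  conv (C := H ⊗[k] (H ⊗[k] (H ⊗[k] H))) (conv (fPure σ) (gPure τ)) (hPure σ)
  = conv (C := H ⊗[k] (H ⊗[k] (H ⊗[k] H))) (conv (hPure σ) (gPure τ)) (fPure σ)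

/-- `D¹(γ)(h,h') = γ(h₁)γ(h'₁)γinv(h₂h'₂)` where `γinv` is the convolution inverse of `γ`. -/
def D1 (γ γinv : H →ₗ[k] k) : H ⊗[k] H →ₗ[k] k :=
  conv (LinearMap.mul' k k ∘ₗ TensorProduct.map γ γ) (γinv ∘ₗ mulH)

/-- The deformed product `h ·σ h' = σ(h₁,h'₁) h₂h'₂`. -/
def mulSig (σ : H ⊗[k] H →ₗ[k] k) : H ⊗[k] H →ₗ[k] H :=
  (TensorProduct.lid k H).toLinearMap ∘ₗ TensorProduct.map σ mulH ∘ₗ Coalgebra.comul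

/-- Neatness for `γ : H → k`: `γ(ab₁)γ(b₂c) = γ(b₁c)γ(ab₂)`. -/
def Neat1 (γ : H →ₗ[k] k) : Prop :=
  conv (γ ∘ₗ mulH ∘ₗ TensorProduct.map LinearMap.id pr1) (γ ∘ₗ mulH ∘ₗ dropL3)
  = conv (γ ∘ₗ mulH ∘ₗ dropL3) (γ ∘ₗ mulH ∘ₗ TensorProduct.map LinearMap.id pr1)

/-- `γ ∈ Reg¹(H)`: normalized and convolution invertible. -/
def Reg1 (γ : H →ₗ[k] k) : Prop :=
  γ 1 = 1 ∧ ∃ δ : H →ₗ[k] k, conv γ δ = (Coalgebra.counit : H →ₗ[k] k) ∧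
    conv δ γ = (Coalgebra.counit : H →ₗ[k] k)

/-- `σ ∈ Reg²(H)`: normalized and convolution invertible. -/
def Reg2 (σ : H ⊗[k] H →ₗ[k] k) : Prop :=
  Normalized σ ∧ ∃ τ : H ⊗[k] H →ₗ[k] k,
    conv σ τ = (Coalgebra.counit : H ⊗[k] H →ₗ[k] k) ∧
    conv τ σ = (Coalgebra.counit : H ⊗[k] H →ₗ[k] k)

/-- `a ⊗ b ↦ γ(a b₁) b₂`. -/
def stmt17L (γ : H →ₗ[k] k) : H ⊗[k] H →ₗ[k] H :=
  (TensorProduct.lid k H).toLinearMap ∘ₗ TensorProduct.map (γ ∘ₗ mulH) LinearMap.id ∘ₗ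
    (TensorProduct.assoc k H H H).symm.toLinearMap ∘ₗ
      TensorProduct.map LinearMap.id Coalgebra.comul

/-- `a ⊗ b ↦ γ(a b₂) b₁`. -/
def stmt17R (γ : H →ₗ[k] k) : H ⊗[k] H →ₗ[k] H :=
  (TensorProduct.lid k H).toLinearMap ∘ₗ TensorProduct.map (γ ∘ₗ mulH) LinearMap.id ∘ₗ
    (TensorProduct.assoc k H H H).symm.toLinearMap ∘ₗ
      TensorProduct.map LinearMap.id
        ((TensorProduct.comm k H H).toLinearMap ∘ₗ Coalgebra.comul)

end Defs

section Aux

open Coalgebra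

variable {k : Type u} [CommRing k] {H : Type u} [Ring H] [Bialgebra k H]
variable {C : Type u} [AddCommGroup C] [Module k C] [Coalgebra k C]
variable {A : Type u} [Ring A] [Algebra k A]

/-- Generalized convolution with values in an algebra. -/
def cvA (f g : C →ₗ[k] A) : C →ₗ[k] A :=
  LinearMap.mul' k A ∘ₗ TensorProduct.map f g ∘ₗ Coalgebra.comul

/-- Convolution unit. -/
def cvOne : C →ₗ[k] A := Algebra.linearMap k A ∘ₗ Coalgebra.counit

lemma conv_eq_cvA (f g : C →ₗ[k] k) : conv f g = cvA f g := rfl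

lemma cvOne_k : (cvOne : C →ₗ[k] k) = Coalgebra.counit := by
  apply LinearMap.ext; intro c
  simp [cvOne]

lemma cvA_one_left (f : C →ₗ[k] A) : cvA cvOne f = f := by
  have h : TensorProduct.map (Algebra.linearMap k A ∘ₗ Coalgebra.counit) f
      = TensorProduct.map (Algebra.linearMap k A) f ∘ₗ (Coalgebra.counit (R := k) (A := C)).rTensor C := by
    rw [LinearMap.rTensor, ← TensorProduct.map_comp, LinearMap.comp_id]
  apply LinearMap.ext; intro c
  rw [cvA, cvOne, LinearMap.comp_apply, LinearMap.comp_apply, h, LinearMap.comp_apply,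
    Coalgebra.rTensor_counit_comul]
  simp

lemma cvA_one_right (f : C →ₗ[k] A) : cvA f cvOne = f := by
  have h : TensorProduct.map f (Algebra.linearMap k A ∘ₗ Coalgebra.counit)
      = TensorProduct.map f (Algebra.linearMap k A) ∘ₗ (Coalgebra.counit (R := k) (A := C)).lTensor C := by
    rw [LinearMap.lTensor, ← TensorProduct.map_comp, LinearMap.comp_id]
  apply LinearMap.ext; intro c
  rw [cvA, cvOne, LinearMap.comp_apply, LinearMap.comp_apply, h, LinearMap.comp_apply,
    Coalgebra.lTensor_counit_comul]
  simp

lemma mul3_comp :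
    LinearMap.mul' k A ∘ₗ (LinearMap.mul' k A).rTensor A ∘ₗ
      (TensorProduct.assoc k A A A).symm.toLinearMap
    = LinearMap.mul' k A ∘ₗ (LinearMap.mul' k A).lTensor A := by
  apply TensorProduct.ext'
  intro x yz
  simp only [LinearMap.comp_apply]
  induction yz using TensorProduct.induction_on with
  | zero => simp only [TensorProduct.tmul_zero, map_zero]
  | tmul y z => simp [mul_assoc]
  | add u v hu hv => simp only [TensorProduct.tmul_add, map_add, hu, hv]

lemma cvA_assoc (f g h : C →ₗ[k] A) : cvA (cvA f g) h = cvA f (cvA g h) := by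
  have e1 : TensorProduct.map (LinearMap.mul' k A ∘ₗ TensorProduct.map f g ∘ₗ
        Coalgebra.comul) h
      = (LinearMap.mul' k A).rTensor A ∘ₗ TensorProduct.map (TensorProduct.map f g) h ∘ₗ
          (Coalgebra.comul (R := k) (A := C)).rTensor C := by
    simp only [LinearMap.rTensor]
    rw [← TensorProduct.map_comp, ← TensorProduct.map_comp]
    simp only [LinearMap.id_comp, LinearMap.comp_id]
  have e2 : TensorProduct.map f (LinearMap.mul' k A ∘ₗ TensorProduct.map g h ∘ₗ
        Coalgebra.comul)
      = (LinearMap.mul' k A).lTensor A ∘ₗ TensorProduct.map f (TensorProduct.map g h) ∘ₗ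
          (Coalgebra.comul (R := k) (A := C)).lTensor C := by
    simp only [LinearMap.lTensor]
    rw [← TensorProduct.map_comp, ← TensorProduct.map_comp]
    simp only [LinearMap.id_comp, LinearMap.comp_id]
  apply LinearMap.ext; intro c
  simp only [cvA, LinearMap.comp_apply, e1, e2]
  rw [← Coalgebra.coassoc_symm_apply, TensorProduct.map_map_assoc_symm]
  simpa using DFunLike.congr_fun (mul3_comp (k := k) (A := A))
    (TensorProduct.map f (TensorProduct.map g h)
      ((Coalgebra.comul (R := k)).lTensor C ((Coalgebra.comul (R := k)) c)))

lemma lid_map_eq {X Y : Type u} [AddCommGroup X] [AddCommGroup Y] [Module k X] [Module k Y]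
    (f : X →ₗ[k] k) (g : Y →ₗ[k] H) :
    (TensorProduct.lid k H).toLinearMap ∘ₗ TensorProduct.map f g
    = LinearMap.mul' k H ∘ₗ TensorProduct.map (Algebra.linearMap k H ∘ₗ f) g := by
  apply TensorProduct.ext'
  intro x y
  simp [Algebra.smul_def]

lemma rid_map_eq {X Y : Type u} [AddCommGroup X] [AddCommGroup Y] [Module k X] [Module k Y]
    (f : X →ₗ[k] k) (g : Y →ₗ[k] H) :
    (TensorProduct.rid k H).toLinearMap ∘ₗ TensorProduct.map g f
    = LinearMap.mul' k H ∘ₗ TensorProduct.map g (Algebra.linearMap k H ∘ₗ f) := by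
  apply TensorProduct.ext'
  intro y x
  simp [Algebra.smul_def, Algebra.commutes]

lemma isLazy2_iff (σ : H ⊗[k] H →ₗ[k] k) :
    IsLazy2 σ ↔ cvA (Algebra.linearMap k H ∘ₗ σ) mulH = cvA mulH (Algebra.linearMap k H ∘ₗ σ) := by
  have e1 : (TensorProduct.lid k H).toLinearMap ∘ₗ TensorProduct.map σ mulH ∘ₗ
        Coalgebra.comul = cvA (Algebra.linearMap k H ∘ₗ σ) mulH := by
    rw [cvA, ← LinearMap.comp_assoc, ← LinearMap.comp_assoc, lid_map_eq]
  have e2 : (TensorProduct.rid k H).toLinearMap ∘ₗ TensorProduct.map mulH σ ∘ₗ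
        Coalgebra.comul = cvA mulH (Algebra.linearMap k H ∘ₗ σ) := by
    rw [cvA, ← LinearMap.comp_assoc, ← LinearMap.comp_assoc, rid_map_eq]
  rw [IsLazy2, e1, e2]

lemma u_comp_conv (f g : C →ₗ[k] k) :
    Algebra.linearMap k H ∘ₗ conv f g
    = cvA (Algebra.linearMap k H ∘ₗ f) (Algebra.linearMap k H ∘ₗ g) := by
  have key : (Algebra.linearMap k H ∘ₗ LinearMap.mul' k k) ∘ₗ TensorProduct.map f g
      = LinearMap.mul' k H ∘ₗ
        TensorProduct.map (Algebra.linearMap k H ∘ₗ f) (Algebra.linearMap k H ∘ₗ g) := by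
    apply TensorProduct.ext'
    intro x y
    simp
  rw [conv, cvA]
  simp only [← LinearMap.comp_assoc]
  rw [key]

lemma cvA_lazy_mul {a b m : C →ₗ[k] A} (ha : cvA a m = cvA m a) (hb : cvA b m = cvA m b) :
    cvA (cvA a b) m = cvA m (cvA a b) := by
  rw [cvA_assoc, hb, ← cvA_assoc, ha, cvA_assoc]

lemma cvA_lazy_inv {a b m : C →ₗ[k] A} (hab : cvA a b = cvOne) (hba : cvA b a = cvOne)
    (ha : cvA a m = cvA m a) : cvA b m = cvA m b := by
  have h2 : cvA (cvA b m) a = m := by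
    rw [cvA_assoc, ← ha, ← cvA_assoc, hba, cvA_one_left]
  calc cvA b m = cvA (cvA b m) (cvA a b) := by rw [hab, cvA_one_right]
    _ = cvA (cvA (cvA b m) a) b := (cvA_assoc (cvA b m) a b).symm
    _ = cvA m b := by rw [h2]

lemma counit_tmul (a b : H) :
    (Coalgebra.counit (R := k) (A := H ⊗[k] H)) (a ⊗ₜ[k] b)
      = Coalgebra.counit (R := k) a * Coalgebra.counit (R := k) b := by
  rw [TensorProduct.counit_tmul, smul_eq_mul, mul_comm]

lemma comul_one_tmul (h : H) (repr : Coalgebra.Repr k h (H × H)) :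
    (Coalgebra.comul (R := k) (A := H ⊗[k] H)) ((1 : H) ⊗ₜ[k] h)
      = ∑ i ∈ repr.index,
          ((1 : H) ⊗ₜ[k] repr.left i) ⊗ₜ[k] ((1 : H) ⊗ₜ[k] repr.right i) := by
  have hr : (Coalgebra.comul (R := k)) h = ∑ i ∈ repr.index, repr.left i ⊗ₜ[k] repr.right i :=
    repr.eq.symm
  simp only [TensorProduct.comul_tmul, LinearMap.comp_apply,
    TensorProduct.map_tmul, Bialgebra.comul_one, hr, Algebra.TensorProduct.one_def,
    TensorProduct.tmul_sum, map_sum]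
  simp [TensorProduct.tensorTensorTensorComm_tmul]

lemma comul_tmul_one (h : H) (repr : Coalgebra.Repr k h (H × H)) :
    (Coalgebra.comul (R := k) (A := H ⊗[k] H)) (h ⊗ₜ[k] (1 : H))
      = ∑ i ∈ repr.index,
          (repr.left i ⊗ₜ[k] (1 : H)) ⊗ₜ[k] (repr.right i ⊗ₜ[k] (1 : H)) := by
  have hr : (Coalgebra.comul (R := k)) h = ∑ i ∈ repr.index, repr.left i ⊗ₜ[k] repr.right i :=
    repr.eq.symm
  simp only [TensorProduct.comul_tmul, LinearMap.comp_apply,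
    TensorProduct.map_tmul, Bialgebra.comul_one, hr, Algebra.TensorProduct.one_def,
    TensorProduct.sum_tmul, map_sum]
  simp [TensorProduct.tensorTensorTensorComm_tmul]

lemma conv_one_tmul (f g : H ⊗[k] H →ₗ[k] k)
    (hf : ∀ h : H, f ((1 : H) ⊗ₜ[k] h) = Coalgebra.counit (R := k) h) (h : H) :
    conv f g ((1 : H) ⊗ₜ[k] h) = g ((1 : H) ⊗ₜ[k] h) := by
  set repr := Coalgebra.Repr.arbitrary k h with hrepr
  have key : ∑ i ∈ repr.index,
      (Coalgebra.counit (R := k) (repr.left i)) * g ((1 : H) ⊗ₜ[k] repr.right i)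
      = g ((1 : H) ⊗ₜ[k] h) := by
    have h2 := Coalgebra.sum_counit_tmul_eq (R := k) repr
    have h3 := congrArg
      (g ∘ₗ TensorProduct.mk k H H 1 ∘ₗ (TensorProduct.lid k H).toLinearMap) h2
    rw [map_sum] at h3
    simp only [LinearMap.comp_apply, LinearEquiv.coe_coe, TensorProduct.lid_tmul,
      TensorProduct.mk_apply, map_smul, one_smul, smul_eq_mul] at h3
    exact h3
  calc conv f g ((1 : H) ⊗ₜ[k] h)
      = ∑ i ∈ repr.index, f ((1 : H) ⊗ₜ[k] repr.left i) * g ((1 : H) ⊗ₜ[k] repr.right i) := by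
        rw [conv, LinearMap.comp_apply, LinearMap.comp_apply, comul_one_tmul h repr,
          map_sum, map_sum]
        simp only [TensorProduct.map_tmul, LinearMap.mul'_apply]
    _ = g ((1 : H) ⊗ₜ[k] h) := by
        rw [← key]
        exact Finset.sum_congr rfl fun i _ => by rw [hf]

lemma conv_tmul_one (f g : H ⊗[k] H →ₗ[k] k)
    (hg : ∀ h : H, g (h ⊗ₜ[k] (1 : H)) = Coalgebra.counit (R := k) h) (h : H) :
    conv f g (h ⊗ₜ[k] (1 : H)) = f (h ⊗ₜ[k] (1 : H)) := by
  set repr := Coalgebra.Repr.arbitrary k h with hrepr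
  have key : ∑ i ∈ repr.index,
      (Coalgebra.counit (R := k) (repr.right i)) * f (repr.left i ⊗ₜ[k] (1 : H))
      = f (h ⊗ₜ[k] (1 : H)) := by
    have h2 := Coalgebra.sum_tmul_counit_eq (R := k) repr
    have h3 := congrArg
      (f ∘ₗ (TensorProduct.mk k H H).flip 1 ∘ₗ (TensorProduct.rid k H).toLinearMap) h2
    rw [map_sum] at h3
    simp only [LinearMap.comp_apply, LinearEquiv.coe_coe, TensorProduct.rid_tmul,
      LinearMap.flip_apply, TensorProduct.mk_apply, map_smul, one_smul, smul_eq_mul] at h3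
    exact h3
  calc conv f g (h ⊗ₜ[k] (1 : H))
      = ∑ i ∈ repr.index, f (repr.left i ⊗ₜ[k] (1 : H)) * g (repr.right i ⊗ₜ[k] (1 : H)) := by
        rw [conv, LinearMap.comp_apply, LinearMap.comp_apply, comul_tmul_one h repr,
          map_sum, map_sum]
        simp only [TensorProduct.map_tmul, LinearMap.mul'_apply]
    _ = f (h ⊗ₜ[k] (1 : H)) := by
        rw [← key]
        exact Finset.sum_congr rfl fun i _ => by rw [hg, mul_comm]

lemma conv_inv_conv (σ τ σ' τ' : C →ₗ[k] k)
    (hσ : conv σ σ' = (Coalgebra.counit : C →ₗ[k] k))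
    (hτ : conv τ τ' = (Coalgebra.counit : C →ₗ[k] k)) :
    conv (conv σ τ) (conv τ' σ') = (Coalgebra.counit : C →ₗ[k] k) := by
  have hone : (Coalgebra.counit : C →ₗ[k] k) = cvOne := cvOne_k.symm
  simp only [conv_eq_cvA] at *
  simp only [hone] at hσ hτ ⊢
  rw [cvA_assoc, ← cvA_assoc τ τ' σ', hτ, cvA_one_left, hσ]

end Aux

/-- The lazy elements of `Reg²(H)` form a subgroup of `Reg²(H)` under convolution. -/
theorem stmt4 {k : Type u} [Field k] {H : Type u} [Ring H] [Bialgebra k H] :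
    (Reg2 (Coalgebra.counit : H ⊗[k] H →ₗ[k] k) ∧
      IsLazy2 (Coalgebra.counit : H ⊗[k] H →ₗ[k] k)) ∧
    (∀ σ τ : H ⊗[k] H →ₗ[k] k, Reg2 σ → IsLazy2 σ → Reg2 τ → IsLazy2 τ →
      Reg2 (conv σ τ) ∧ IsLazy2 (conv σ τ)) ∧
    (∀ σ τ : H ⊗[k] H →ₗ[k] k, Reg2 σ → IsLazy2 σ →
      conv σ τ = (Coalgebra.counit : H ⊗[k] H →ₗ[k] k) →
      conv τ σ = (Coalgebra.counit : H ⊗[k] H →ₗ[k] k) → Reg2 τ ∧ IsLazy2 τ) := by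
  have huε : Algebra.linearMap k H ∘ₗ (Coalgebra.counit : H ⊗[k] H →ₗ[k] k)
      = (cvOne : H ⊗[k] H →ₗ[k] H) := rfl
  refine ⟨⟨⟨?_, ⟨Coalgebra.counit, ?_, ?_⟩⟩, ?_⟩, ?_, ?_⟩
  · intro h
    constructor <;> simp [_root_.counit_tmul]
  · rw [conv_eq_cvA, ← cvOne_k, cvA_one_left]
  · rw [conv_eq_cvA, ← cvOne_k, cvA_one_left]
  · rw [isLazy2_iff, huε, cvA_one_left, cvA_one_right]
  · rintro σ τ ⟨hNσ, σ', hσσ', hσ'σ⟩ hLσ ⟨hNτ, τ', hττ', hτ'τ⟩ hLτ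
    refine ⟨⟨?_, ⟨conv τ' σ', ?_, ?_⟩⟩, ?_⟩
    · intro h
      constructor
      · rw [conv_one_tmul σ τ (fun h' => (hNσ h').1) h]
        exact (hNτ h).1
      · rw [conv_tmul_one σ τ (fun h' => (hNτ h').2) h]
        exact (hNσ h).2
    · exact conv_inv_conv σ τ σ' τ' hσσ' hττ'
    · exact conv_inv_conv τ' σ' τ σ hτ'τ hσ'σ
    · rw [isLazy2_iff, u_comp_conv]
      exact cvA_lazy_mul ((isLazy2_iff σ).mp hLσ) ((isLazy2_iff τ).mp hLτ)
  · rintro σ τ ⟨hNσ, σ', hσσ', hσ'σ⟩ hLσ hστ hτσ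
    refine ⟨⟨?_, ⟨σ, hτσ, hστ⟩⟩, ?_⟩
    · intro h
      constructor
      · have hh := conv_one_tmul σ τ (fun h' => (hNσ h').1) h
        rw [hστ] at hh
        rw [← hh, _root_.counit_tmul, Bialgebra.counit_one, one_mul]
      · have hh := conv_tmul_one τ σ (fun h' => (hNσ h').2) h
        rw [hτσ] at hh
        rw [← hh, _root_.counit_tmul, Bialgebra.counit_one, mul_one]
    · rw [isLazy2_iff]
      have hab : cvA (Algebra.linearMap k H ∘ₗ σ) (Algebra.linearMap k H ∘ₗ τ)
          = (cvOne : H ⊗[k] H →ₗ[k] H) := by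
        rw [← u_comp_conv, hστ]
        exact huε
      have hba : cvA (Algebra.linearMap k H ∘ₗ τ) (Algebra.linearMap k H ∘ₗ σ)
          = (cvOne : H ⊗[k] H →ₗ[k] H) := by
        rw [← u_comp_conv, hτσ]
        exact huε
      exact cvA_lazy_inv hab hba ((isLazy2_iff σ).mp hLσ)

end
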